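/- Let G be a semi-Markovian causal graph with observed variables V, let S ⊆ V, and let S₁, …, S_l be the c-components of S. Then Q[S] is identifiable from G if and only if Q[S_i] is identifiable from G for every i ∈ [1:l]. -/

import Mathlib

open scoped Classical

/-- A semi-Markovian causal graph: a DAG over a finite vertex set partitioned into
observed (`obs`) and unobserved (`unobs`) variables, where every unobserved variable
has no parents and exactly two (distinct, observed) children. -/
structure CausalGraph (ν : Type) [Fintype ν] [DecidableEq ν] where
  obs : Finset ν
  unobs : Finset ν
  disj : Disjoint obs unobs
  E : ν → ν → Prop
  edge_mem : ∀ x y, E x y → x ∈ obs ∪ unobs ∧ y ∈ obs ∪ unobs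
  acyclic : ∀ x, ¬ Relation.TransGen E x x
  unobs_no_parent : ∀ u ∈ unobs, ∀ w, ¬ E w u
  unobs_two_children : ∀ u ∈ unobs,
    ∃ a b, a ≠ b ∧ a ∈ obs ∧ b ∈ obs ∧ (∀ w, E u w ↔ w = a ∨ w = b)

namespace CausalGraph

variable {ν : Type} [Fintype ν] [DecidableEq ν]

def verts (G : CausalGraph ν) : Finset ν := G.obs ∪ G.unobs

/-- A structural equation model over the causal graph `G`: finite nonempty domains
(encoded as finite sets of naturals), a pmf for each unobserved variable, and a
conditional pmf (given an assignment to the parents) for each observed variable. -/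
structure SEM (G : CausalGraph ν) where
  dom : ν → Finset ℕ
  dom_ne : ∀ x, (dom x).Nonempty
  pU : ν → ℕ → ℝ
  pU_nonneg : ∀ u n, 0 ≤ pU u n
  pU_sum : ∀ u ∈ G.unobs, ∑ n ∈ dom u, pU u n = 1
  pO : ν → ℕ → (ν → ℕ) → ℝ
  pO_nonneg : ∀ x n pa, 0 ≤ pO x n pa
  pO_sum : ∀ x ∈ G.obs, ∀ pa : ν → ℕ, ∑ n ∈ dom x, pO x n pa = 1
  pO_par : ∀ x n (pa pa' : ν → ℕ), (∀ p, G.E p x → pa p = pa' p) → pO x n pa = pO x n pa'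

namespace SEM

variable {G : CausalGraph ν}

/-- Full assignments: all variables of `G` get values in their domains
(non-vertices are pinned to `0`). -/
noncomputable def fullAssign (M : SEM G) : Finset (ν → ℕ) :=
  Fintype.piFinset (fun x => if x ∈ G.verts then M.dom x else {0})

/-- Observed assignments `dom(V)`: observed variables get values in their domains
(all other coordinates are pinned to `0`). -/
noncomputable def obsAssign (M : SEM G) : Finset (ν → ℕ) :=
  Fintype.piFinset (fun x => if x ∈ G.obs then M.dom x else {0})

/-- `Q^M[S](v) = Σ_u Π_{X ∈ S} P(x | pa_G(X)) Π_{U} P(u)`. -/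
noncomputable def Q (M : SEM G) (S : Finset ν) (v : ν → ℕ) : ℝ :=
  ∑ w ∈ M.fullAssign.filter (fun w => ∀ x ∈ G.obs, w x = v x),
    (∏ x ∈ S, M.pO x (w x) w) * ∏ u ∈ G.unobs, M.pU u (w u)

/-- The observational distribution `P^M(v) = Q^M[V](v)`. -/
noncomputable def P (M : SEM G) (v : ν → ℕ) : ℝ := M.Q G.obs v

/-- Post-interventional probability `P^M_x(y)`: sum of `Q^M[V∖X]` over all observed
realizations consistent with `x` on `X` and `y` on `Y`. -/
noncomputable def Px (M : SEM G) (X : Finset ν) (x : ν → ℕ) (Y : Finset ν) (y : ν → ℕ) : ℝ :=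
  ∑ v ∈ M.obsAssign.filter (fun v => (∀ i ∈ X, v i = x i) ∧ (∀ i ∈ Y, v i = y i)),
    M.Q (G.obs \ X) v

/-- `M ∈ 𝕄⁺(G)`: strictly positive observational distribution. -/
def positive (M : SEM G) : Prop := ∀ v ∈ M.obsAssign, 0 < M.P v

end SEM

/-- The causal effect of `X` on `Y` is identifiable from `G`. -/
def Identifiable (G : CausalGraph ν) (X Y : Finset ν) : Prop :=
  ∀ M₁ M₂ : SEM G, M₁.positive → M₂.positive →
    (∀ i ∈ G.obs, M₁.dom i = M₂.dom i) →
    (∀ v ∈ M₁.obsAssign, M₁.P v = M₂.P v) →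
    ∀ x y : ν → ℕ, (∀ i ∈ X, x i ∈ M₁.dom i) → (∀ i ∈ Y, y i ∈ M₁.dom i) →
      M₁.Px X x Y y = M₂.Px X x Y y

/-- `Q[S]` is identifiable from `G`. -/
def QIdentifiable (G : CausalGraph ν) (S : Finset ν) : Prop :=
  Identifiable G (G.obs \ S) S

/-- The causal effect of `X` on `Y` is g-identifiable from `(𝔸, G)`. -/
def GIdentifiable (G : CausalGraph ν) (𝔸 : Finset (Finset ν)) (X Y : Finset ν) : Prop :=
  ∀ M₁ M₂ : SEM G, M₁.positive → M₂.positive →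
    (∀ i ∈ G.obs, M₁.dom i = M₂.dom i) →
    (∀ A ∈ 𝔸, ∀ v ∈ M₁.obsAssign, M₁.Q A v = M₂.Q A v) →
    ∀ x y : ν → ℕ, (∀ i ∈ X, x i ∈ M₁.dom i) → (∀ i ∈ Y, y i ∈ M₁.dom i) →
      M₁.Px X x Y y = M₂.Px X x Y y

/-- `Q[S]` is g-identifiable from `(𝔸, G)`. -/
def QGIdentifiable (G : CausalGraph ν) (𝔸 : Finset (Finset ν)) (S : Finset ν) : Prop :=
  GIdentifiable G 𝔸 (G.obs \ S) S

/-- Bidirected edge of `G_X` between `a` and `b`: distinct members of `X` sharing an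
unobserved parent (whose two children then necessarily both lie in `X`). -/
def biEdge (G : CausalGraph ν) (X : Finset ν) (a b : ν) : Prop :=
  a ≠ b ∧ a ∈ X ∧ b ∈ X ∧ ∃ u ∈ G.unobs, G.E u a ∧ G.E u b

/-- `X` is a single c-component of `G`. -/
def SingleC (G : CausalGraph ν) (X : Finset ν) : Prop :=
  X.Nonempty ∧ ∀ a ∈ X, ∀ b ∈ X, Relation.ReflTransGen (G.biEdge X) a b

/-- The c-components of `S`: connected components of the bidirected part of `G_S`. -/
noncomputable def cComponents (G : CausalGraph ν) (S : Finset ν) : Finset (Finset ν) :=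
  S.image (fun a => S.filter (fun b => Relation.ReflTransGen (G.biEdge S) a b))

/-- Directed edge of `G_X` (both endpoints in `X`). -/
def dirEdgeIn (G : CausalGraph ν) (X : Finset ν) (a b : ν) : Prop :=
  a ∈ X ∧ b ∈ X ∧ G.E a b

/-- `Anc_Y(G_X)`: members of `X` having a directed path in `G_X` to some member of `Y`. -/
noncomputable def ancIn (G : CausalGraph ν) (X Y : Finset ν) : Finset ν :=
  X.filter (fun a => ∃ y ∈ Y, Relation.ReflTransGen (G.dirEdgeIn X) a y)

/-- Unobserved vertices of the induced subgraph `G[A]`: unobserved vertices of `G`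
both of whose children lie in `A`. -/
noncomputable def inducedUnobs (G : CausalGraph ν) (A : Finset ν) : Finset ν :=
  G.unobs.filter (fun u => ∀ w, G.E u w → w ∈ A)

/-- The induced subgraph `G[A]`. -/
noncomputable def induced (G : CausalGraph ν) (A : Finset ν) : CausalGraph ν where
  obs := A ∩ G.obs
  unobs := G.inducedUnobs A
  disj := G.disj.mono Finset.inter_subset_right (Finset.filter_subset _ _)
  E x y := G.E x y ∧ x ∈ (A ∩ G.obs) ∪ G.inducedUnobs A ∧ y ∈ (A ∩ G.obs) ∪ G.inducedUnobs A
  edge_mem := fun x y h => ⟨h.2.1, h.2.2⟩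
  acyclic := fun x h => G.acyclic x (by
    suffices key : ∀ a b, Relation.TransGen _ a b → Relation.TransGen G.E a b from key x x h
    intro a b h'
    induction h' with
    | single hab => exact Relation.TransGen.single hab.1
    | tail _ hab ih => exact Relation.TransGen.tail ih hab.1)
  unobs_no_parent := fun u hu w hw =>
    G.unobs_no_parent u (Finset.mem_filter.mp hu).1 w hw.1
  unobs_two_children := by
    intro u hu
    have hu' := Finset.mem_filter.mp hu
    obtain ⟨a, b, hab, ha, hb, hiff⟩ := G.unobs_two_children u hu'.1
    have hEa : G.E u a := (hiff a).mpr (Or.inl rfl)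
    have hEb : G.E u b := (hiff b).mpr (Or.inr rfl)
    have haA : a ∈ A := hu'.2 a hEa
    have hbA : b ∈ A := hu'.2 b hEb
    refine ⟨a, b, hab, Finset.mem_inter.mpr ⟨haA, ha⟩, Finset.mem_inter.mpr ⟨hbA, hb⟩, ?_⟩
    intro w
    constructor
    · intro hw; exact (hiff w).mp hw.1
    · rintro (rfl | rfl)
      · exact ⟨hEa, Finset.mem_union.mpr (Or.inr hu),
          Finset.mem_union.mpr (Or.inl (Finset.mem_inter.mpr ⟨haA, ha⟩))⟩
      · exact ⟨hEb, Finset.mem_union.mpr (Or.inr hu),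
          Finset.mem_union.mpr (Or.inl (Finset.mem_inter.mpr ⟨hbA, hb⟩))⟩

/-- `H` is a subgraph of `G`. -/
def IsSubgraph (H G : CausalGraph ν) : Prop :=
  H.obs ⊆ G.obs ∧ H.unobs ⊆ G.unobs ∧ ∀ a b, H.E a b → G.E a b

/-- `H` is an `R`-rooted c-forest: `R` is the root set of `H`, the observed vertex set of
`H` is a single c-component, and every observed vertex has at most one child in `H`. -/
def IsCForest (H : CausalGraph ν) (R : Finset ν) : Prop :=
  H.obs.filter (fun x => ∀ w, ¬ H.E x w) = R ∧
  H.SingleC H.obs ∧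
  ∀ x ∈ H.obs, ∀ w w', H.E x w → H.E x w' → w = w'

end CausalGraph

section PiLemmas
variable {ν : Type} [Fintype ν] [DecidableEq ν]

open Finset

lemma TP.sum_pi_mul (d : ν → Finset ℕ) (A : Finset ν) (f g : (ν → ℕ) → ℝ)
    (hf : ∀ w w' : ν → ℕ, (∀ i ∈ A, w i = w' i) → f w = f w')
    (hg : ∀ w w' : ν → ℕ, (∀ i ∉ A, w i = w' i) → g w = g w') :
    ∑ w ∈ Fintype.piFinset d, f w * g w =
      (∑ w ∈ Fintype.piFinset (fun i => if i ∈ A then d i else {0}), f w) *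
      (∑ w ∈ Fintype.piFinset (fun i => if i ∈ A then ({0} : Finset ℕ) else d i), g w) := by
  rw [Finset.sum_mul_sum, ← Finset.sum_product']
  refine Finset.sum_nbij' (fun w => ((fun i => if i ∈ A then w i else 0),
      (fun i => if i ∈ A then 0 else w i)))
    (fun p => fun i => if i ∈ A then p.1 i else p.2 i) ?_ ?_ ?_ ?_ ?_
  · intro w hw
    rw [Fintype.mem_piFinset] at hw
    rw [Finset.mem_product]
    constructor <;> rw [Fintype.mem_piFinset] <;> intro i <;> by_cases hi : i ∈ A <;>
      simp [hi, hw i]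
  · intro p hp
    rw [Finset.mem_product] at hp
    obtain ⟨h1, h2⟩ := hp
    rw [Fintype.mem_piFinset] at h1 h2 ⊢
    intro i
    by_cases hi : i ∈ A
    · simpa [hi] using h1 i
    · simpa [hi] using h2 i
  · intro w _
    funext i
    by_cases hi : i ∈ A <;> simp [hi]
  · intro p hp
    rw [Finset.mem_product] at hp
    obtain ⟨h1, h2⟩ := hp
    rw [Fintype.mem_piFinset] at h1 h2
    ext i
    · by_cases hi : i ∈ A
      · simp [hi]
      · simpa [hi] using (Finset.mem_singleton.mp (by simpa [hi] using h1 i)).symm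
    · by_cases hi : i ∈ A
      · simpa [hi] using (Finset.mem_singleton.mp (by simpa [hi] using h2 i)).symm
      · simp [hi]
  · intro w _
    have e1 : f w = f (fun i => if i ∈ A then w i else 0) := by
      apply hf; intro i hi; simp [hi]
    have e2 : g w = g (fun i => if i ∈ A then 0 else w i) := by
      apply hg; intro i hi; simp [hi]
    rw [← e1, ← e2]

lemma TP.sum_pi_update (d : ν → Finset ℕ) (i : ν) (f : (ν → ℕ) → ℝ) :
    ∑ w ∈ Fintype.piFinset d, f w =
      ∑ n ∈ d i, ∑ w ∈ Fintype.piFinset (Function.update d i ({0} : Finset ℕ)),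
        f (Function.update w i n) := by
  rw [← Finset.sum_product']
  refine (Finset.sum_nbij' (fun p : ℕ × (ν → ℕ) => Function.update p.2 i p.1)
    (fun w => (w i, Function.update w i 0)) ?_ ?_ ?_ ?_ ?_).symm
  · intro p hp
    rw [Finset.mem_product] at hp
    obtain ⟨h1, h2⟩ := hp
    rw [Fintype.mem_piFinset] at h2 ⊢
    intro j
    show Function.update p.2 i p.1 j ∈ d j
    by_cases hj : j = i
    · subst hj; simpa using h1
    · rw [Function.update_of_ne hj]
      have := h2 j
      rwa [Function.update_of_ne hj] at this
  · intro w hw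
    rw [Fintype.mem_piFinset] at hw
    rw [Finset.mem_product]
    refine ⟨hw i, ?_⟩
    rw [Fintype.mem_piFinset]
    intro j
    show Function.update w i 0 j ∈ Function.update d i ({0} : Finset ℕ) j
    by_cases hj : j = i
    · subst hj; simp
    · rw [Function.update_of_ne hj, Function.update_of_ne hj]; exact hw j
  · intro p hp
    rw [Finset.mem_product] at hp
    have h0 : p.2 i = 0 := by simpa using Fintype.mem_piFinset.mp hp.2 i
    show ((Function.update p.2 i p.1) i, Function.update (Function.update p.2 i p.1) i 0) = p
    have : Function.update (Function.update p.2 i p.1) i 0 = p.2 := by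
      funext j
      by_cases hj : j = i
      · subst hj; simp [h0]
      · rw [Function.update_of_ne hj, Function.update_of_ne hj]
    rw [this, Function.update_self]
  · intro w _
    show Function.update (Function.update w i 0) i (w i) = w
    funext j
    by_cases hj : j = i
    · subst hj; simp
    · rw [Function.update_of_ne hj, Function.update_of_ne hj]
  · intro p _; rfl

lemma TP.sum_pi_out (d : ν → Finset ℕ) (i : ν) (f : (ν → ℕ) → ℝ) (c : ℕ → ℝ)
    (hf : ∀ (w : ν → ℕ) (n : ℕ), f (Function.update w i n) = f w) :
    ∑ w ∈ Fintype.piFinset d, f w * c (w i) =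
      (∑ n ∈ d i, c n) *
        ∑ w ∈ Fintype.piFinset (Function.update d i ({0} : Finset ℕ)), f w := by
  rw [TP.sum_pi_update d i (fun w => f w * c (w i)), Finset.sum_mul]
  refine Finset.sum_congr rfl fun n _ => ?_
  rw [Finset.mul_sum]
  refine Finset.sum_congr rfl fun w _ => ?_
  rw [Function.update_self, hf, mul_comm]

lemma TP.sum_pi_prod_one (W : Finset ν) : ∀ (d : ν → Finset ℕ) (c : ν → ℕ → ℝ),
    (∀ u ∈ W, ∑ n ∈ d u, c u n = 1) → (∀ i ∉ W, ∃ m, d i = {m}) →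
    ∑ w ∈ Fintype.piFinset d, ∏ u ∈ W, c u (w u) = 1 := by
  induction W using Finset.induction_on with
  | empty =>
    intro d c _ h2
    simp only [Finset.prod_empty]
    rw [Finset.sum_const, nsmul_eq_mul, mul_one]
    have : (Fintype.piFinset d).card = ∏ i : ν, (d i).card := Fintype.card_piFinset d
    rw [this]
    have : ∀ i : ν, (d i).card = 1 := by
      intro i
      obtain ⟨m, hm⟩ := h2 i (Finset.notMem_empty i)
      rw [hm]; simp
    rw [Finset.prod_congr rfl (fun i _ => this i), Finset.prod_const_one]
    norm_num
  | @insert u W hu ih =>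
    intro d c h1 h2
    have step : ∑ w ∈ Fintype.piFinset d, ∏ x ∈ insert u W, c x (w x)
        = ∑ w ∈ Fintype.piFinset d, (∏ x ∈ W, c x (w x)) * c u (w u) := by
      refine Finset.sum_congr rfl fun w _ => ?_
      rw [Finset.prod_insert hu, mul_comm]
    rw [step, TP.sum_pi_out d u (fun w => ∏ x ∈ W, c x (w x)) (c u)
      (by
        intro w n
        refine Finset.prod_congr rfl fun x hx => ?_
        rw [Function.update_of_ne (by rintro rfl; exact hu hx)]),
      h1 u (Finset.mem_insert_self u W), one_mul]
    refine ih _ c ?_ ?_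
    · intro x hx
      rw [Function.update_of_ne (by rintro rfl; exact hu hx)]
      exact h1 x (Finset.mem_insert_of_mem hx)
    · intro i hi
      by_cases hiu : i = u
      · subst hiu; exact ⟨0, by simp⟩
      · rw [Function.update_of_ne hiu]
        exact h2 i (by simp [hiu, hi])

end PiLemmas
namespace TP
open Finset CausalGraph

variable {ν : Type} [Fintype ν] [DecidableEq ν] {G : CausalGraph ν}

lemma notin_unobs (G : CausalGraph ν) {i : ν} (hi : i ∈ G.obs) : i ∉ G.unobs :=
  fun h => (Finset.disjoint_left.mp G.disj hi) h

def pin (G : CausalGraph ν) (v w : ν → ℕ) : ν → ℕ :=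
  fun i => if i ∈ G.unobs then w i else if i ∈ G.obs then v i else 0

lemma pin_obs {v w : ν → ℕ} {i : ν} (hi : i ∈ G.obs) : pin G v w i = v i := by
  simp [pin, notin_unobs G hi, hi]

lemma pin_unobs {v w : ν → ℕ} {i : ν} (hi : i ∈ G.unobs) : pin G v w i = w i := by
  simp [pin, hi]

noncomputable def DU (M : SEM G) : ν → Finset ℕ :=
  fun i => if i ∈ G.unobs then M.dom i else {0}

noncomputable def blk (M : SEM G) (A W : Finset ν) (z : ν → ℕ) : ℝ :=
  (∏ x ∈ A, M.pO x (z x) z) * ∏ u ∈ W, M.pU u (z u)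

lemma blk_congr (M : SEM G) {A W : Finset ν} {z z' : ν → ℕ}
    (h1 : ∀ x ∈ A, z x = z' x)
    (h2 : ∀ x ∈ A, ∀ p, G.E p x → z p = z' p)
    (h3 : ∀ u ∈ W, z u = z' u) :
    blk M A W z = blk M A W z' := by
  unfold blk
  congr 1
  · refine Finset.prod_congr rfl fun x hx => ?_
    rw [h1 x hx]
    exact M.pO_par x (z' x) z z' (h2 x hx)
  · exact Finset.prod_congr rfl fun u hu => by rw [h3 u hu]

lemma blk_union (M : SEM G) {A B W₁ W₂ : Finset ν} (hAB : Disjoint A B)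
    (hW : Disjoint W₁ W₂) (z : ν → ℕ) :
    blk M (A ∪ B) (W₁ ∪ W₂) z = blk M A W₁ z * blk M B W₂ z := by
  unfold blk
  rw [Finset.prod_union hAB, Finset.prod_union hW]
  ring

/-- `Q` as a sum over unobserved assignments of pinned blocks. -/
lemma Q_eq_pin (M : SEM G) (S : Finset ν) (v : ν → ℕ)
    (hv : ∀ i ∈ G.obs, v i ∈ M.dom i) :
    M.Q S v = ∑ w ∈ Fintype.piFinset (DU M), blk M S G.unobs (pin G v w) := by
  unfold SEM.Q
  refine Finset.sum_nbij' (fun w => fun i => if i ∈ G.unobs then w i else 0)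
    (fun w => pin G v w) ?_ ?_ ?_ ?_ ?_
  · intro w hw
    rw [Finset.mem_filter] at hw
    obtain ⟨hw1, _⟩ := hw
    rw [SEM.fullAssign, Fintype.mem_piFinset] at hw1
    show (fun i => if i ∈ G.unobs then w i else 0) ∈ _
    rw [Fintype.mem_piFinset]
    intro i
    by_cases hi : i ∈ G.unobs
    · have : i ∈ G.verts := Finset.mem_union_right _ hi
      simpa [DU, hi, this] using hw1 i
    · simp [DU, hi]
  · intro w hw
    rw [Fintype.mem_piFinset] at hw
    rw [Finset.mem_filter]
    constructor
    · show pin G v w ∈ _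
      rw [SEM.fullAssign, Fintype.mem_piFinset]
      intro i
      by_cases hi : i ∈ G.unobs
      · have hiv : i ∈ G.verts := Finset.mem_union_right _ hi
        have := hw i
        rw [pin_unobs hi]
        simpa [DU, hi, hiv] using this
      · by_cases hio : i ∈ G.obs
        · have hiv : i ∈ G.verts := Finset.mem_union_left _ hio
          rw [pin_obs hio]
          simp [hiv, hv i hio]
        · have hiv : i ∉ G.verts := by
            simp [CausalGraph.verts, hio, hi]
          simp [pin, hi, hio, hiv]
    · intro x hx
      exact pin_obs hx
  · intro w hw
    rw [Finset.mem_filter] at hw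
    obtain ⟨hw1, hw2⟩ := hw
    rw [SEM.fullAssign, Fintype.mem_piFinset] at hw1
    funext i
    show pin G v (fun i => if i ∈ G.unobs then w i else 0) i = w i
    by_cases hi : i ∈ G.unobs
    · rw [pin_unobs hi]; simp [hi]
    · by_cases hio : i ∈ G.obs
      · rw [pin_obs hio]; exact (hw2 i hio).symm
      · have hiv : i ∉ G.verts := by simp [CausalGraph.verts, hio, hi]
        have := hw1 i
        simp only [hiv, if_false, Finset.mem_singleton] at this
        simp [pin, hi, hio, this]
  · intro w hw
    rw [Fintype.mem_piFinset] at hw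
    funext i
    show (if i ∈ G.unobs then pin G v w i else 0) = w i
    by_cases hi : i ∈ G.unobs
    · simp [hi, pin_unobs hi]
    · have := hw i
      simp only [DU, hi, if_false, Finset.mem_singleton] at this
      simp [hi, this]
  · intro w hw
    rw [Finset.mem_filter] at hw
    obtain ⟨hw1, hw2⟩ := hw
    rw [SEM.fullAssign, Fintype.mem_piFinset] at hw1
    have hpin : pin G v (fun i => if i ∈ G.unobs then w i else 0) = w := by
      funext i
      by_cases hi : i ∈ G.unobs
      · rw [pin_unobs hi]; simp [hi]
      · by_cases hio : i ∈ G.obs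
        · rw [pin_obs hio]; exact (hw2 i hio).symm
        · have hiv : i ∉ G.verts := by simp [CausalGraph.verts, hio, hi]
          have := hw1 i
          simp only [hiv, if_false, Finset.mem_singleton] at this
          simp [pin, hi, hio, this]
    show (∏ x ∈ S, M.pO x (w x) w) * ∏ u ∈ G.unobs, M.pU u (w u)
        = blk M S G.unobs (pin G v (fun i => if i ∈ G.unobs then w i else 0))
    rw [hpin]
    rfl

lemma Q_split (M : SEM G) {A B : Finset ν} (hA : A ⊆ G.obs) (hB : B ⊆ G.obs)
    (hAB : Disjoint A B)
    (hsep : ∀ u ∈ G.unobs, ∀ a ∈ A, ∀ b ∈ B, G.E u a → G.E u b → False)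
    (v : ν → ℕ) (hv : ∀ i ∈ G.obs, v i ∈ M.dom i) :
    M.Q (A ∪ B) v = M.Q A v * M.Q B v := by
  classical
  set UA : Finset ν := G.unobs.filter (fun u => ∃ a ∈ A, G.E u a) with hUA
  have hUAsub : UA ⊆ G.unobs := Finset.filter_subset _ _
  set UB : Finset ν := G.unobs \ UA with hUB
  have hUU : UA ∪ UB = G.unobs := Finset.union_sdiff_of_subset hUAsub
  have hUdisj : Disjoint UA UB := Finset.disjoint_sdiff
  set f : (ν → ℕ) → ℝ := fun w => blk M A UA (pin G v w) with hfdef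
  set g : (ν → ℕ) → ℝ := fun w => blk M B UB (pin G v w) with hgdef
  set f0 : (ν → ℕ) → ℝ := fun w => blk M (∅ : Finset ν) UA (pin G v w) with hf0def
  set g0 : (ν → ℕ) → ℝ := fun w => blk M (∅ : Finset ν) UB (pin G v w) with hg0def
  -- agreement lemmas
  have pin_agree : ∀ (w w' : ν → ℕ) (i : ν), (i ∈ G.unobs → w i = w' i) →
      pin G v w i = pin G v w' i := by
    intro w w' i h
    by_cases hi : i ∈ G.unobs
    · rw [pin_unobs hi, pin_unobs hi]; exact h hi
    · simp [pin, hi]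
  have hf : ∀ w w' : ν → ℕ, (∀ i ∈ UA, w i = w' i) → f w = f w' := by
    intro w w' h
    refine blk_congr M ?_ ?_ ?_
    · intro x hx
      exact pin_agree w w' x (fun hc => absurd hc (notin_unobs G (hA hx)))
    · intro x hx p hp
      refine pin_agree w w' p (fun hc => ?_)
      exact h p (Finset.mem_filter.mpr ⟨hc, ⟨x, hx, hp⟩⟩)
    · intro u hu
      exact pin_agree w w' u (fun _ => h u hu)
  have hg : ∀ w w' : ν → ℕ, (∀ i ∉ UA, w i = w' i) → g w = g w' := by
    intro w w' h
    refine blk_congr M ?_ ?_ ?_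
    · intro x hx
      exact pin_agree w w' x (fun hc => absurd hc (notin_unobs G (hB hx)))
    · intro x hx p hp
      refine pin_agree w w' p (fun hc => h p (fun hpUA => ?_))
      obtain ⟨hpu, a, ha, hEa⟩ := Finset.mem_filter.mp hpUA
      exact hsep p hpu a ha x hx hEa hp
    · intro u hu
      refine pin_agree w w' u (fun _ => h u (Finset.disjoint_right.mp hUdisj hu))
  have hf0 : ∀ w w' : ν → ℕ, (∀ i ∈ UA, w i = w' i) → f0 w = f0 w' := by
    intro w w' h
    refine blk_congr M (by simp) (by simp) ?_
    intro u hu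
    exact pin_agree w w' u (fun _ => h u hu)
  have hg0 : ∀ w w' : ν → ℕ, (∀ i ∉ UA, w i = w' i) → g0 w = g0 w' := by
    intro w w' h
    refine blk_congr M (by simp) (by simp) ?_
    intro u hu
    exact pin_agree w w' u (fun _ => h u (Finset.disjoint_right.mp hUdisj hu))
  -- the three sum_pi_mul decompositions
  have eAB := TP.sum_pi_mul (DU M) UA f g hf hg
  have eA := TP.sum_pi_mul (DU M) UA f g0 hf hg0
  have eB := TP.sum_pi_mul (DU M) UA f0 g hf0 hg
  -- the two normalization factors are 1
  have oneA : (∑ w ∈ Fintype.piFinset (fun i => if i ∈ UA then DU M i else {0}), f0 w) = 1 := by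
    have : ∀ w : ν → ℕ, f0 w = ∏ u ∈ UA, M.pU u (w u) := by
      intro w
      rw [hf0def]
      show blk M ∅ UA (pin G v w) = _
      unfold blk
      rw [Finset.prod_empty, one_mul]
      exact Finset.prod_congr rfl fun u hu => by rw [pin_unobs (hUAsub hu)]
    rw [Finset.sum_congr rfl fun w _ => this w]
    refine TP.sum_pi_prod_one UA _ _ ?_ ?_
    · intro u hu
      rw [if_pos hu]
      have hu' : u ∈ G.unobs := hUAsub hu
      simp only [DU, if_pos hu']
      exact M.pU_sum u hu'
    · intro i hi
      exact ⟨0, by rw [if_neg hi]⟩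
  have oneB : (∑ w ∈ Fintype.piFinset (fun i => if i ∈ UA then ({0} : Finset ℕ) else DU M i), g0 w) = 1 := by
    have : ∀ w : ν → ℕ, g0 w = ∏ u ∈ UB, M.pU u (w u) := by
      intro w
      rw [hg0def]
      show blk M ∅ UB (pin G v w) = _
      unfold blk
      rw [Finset.prod_empty, one_mul]
      exact Finset.prod_congr rfl fun u hu =>
        by rw [pin_unobs (Finset.mem_sdiff.mp hu).1]
    rw [Finset.sum_congr rfl fun w _ => this w]
    refine TP.sum_pi_prod_one UB _ _ ?_ ?_
    · intro u hu
      obtain ⟨hu1, hu2⟩ := Finset.mem_sdiff.mp hu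
      rw [if_neg hu2]
      simp only [DU, if_pos hu1]
      exact M.pU_sum u hu1
    · intro i hi
      by_cases hiA : i ∈ UA
      · exact ⟨0, by rw [if_pos hiA]⟩
      · refine ⟨0, ?_⟩
        rw [if_neg hiA]
        have : i ∉ G.unobs := fun hc => hi (Finset.mem_sdiff.mpr ⟨hc, hiA⟩)
        simp [DU, this]
  -- express the three Q's
  have QAB : M.Q (A ∪ B) v = ∑ w ∈ Fintype.piFinset (DU M), f w * g w := by
    rw [Q_eq_pin M _ v hv]
    refine Finset.sum_congr rfl fun w _ => ?_
    rw [hfdef, hgdef]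
    show blk M (A ∪ B) G.unobs (pin G v w) = _
    rw [← hUU, blk_union M hAB hUdisj]
  have QA : M.Q A v = ∑ w ∈ Fintype.piFinset (DU M), f w * g0 w := by
    rw [Q_eq_pin M _ v hv]
    refine Finset.sum_congr rfl fun w _ => ?_
    rw [hfdef, hg0def]
    show blk M A G.unobs (pin G v w) = blk M A UA (pin G v w) * blk M ∅ UB (pin G v w)
    have h := blk_union M (A := A) (B := (∅ : Finset ν)) (W₁ := UA) (W₂ := UB)
      (by simp) hUdisj (pin G v w)
    rw [Finset.union_empty, hUU] at h
    exact h
  have QB : M.Q B v = ∑ w ∈ Fintype.piFinset (DU M), f0 w * g w := by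
    rw [Q_eq_pin M _ v hv]
    refine Finset.sum_congr rfl fun w _ => ?_
    rw [hf0def, hgdef]
    show blk M B G.unobs (pin G v w) = blk M ∅ UA (pin G v w) * blk M B UB (pin G v w)
    have h := blk_union M (A := (∅ : Finset ν)) (B := B) (W₁ := UA) (W₂ := UB)
      (by simp) hUdisj (pin G v w)
    rw [Finset.empty_union, hUU] at h
    exact h
  rw [QAB, QA, QB, eAB, eA, eB, oneA, oneB]
  ring

end TP
namespace TP
open Finset CausalGraph

variable {ν : Type} [Fintype ν] [DecidableEq ν] {G : CausalGraph ν}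

lemma biEdge_symm {S : Finset ν} {a b : ν} (h : G.biEdge S a b) : G.biEdge S b a := by
  obtain ⟨hne, ha, hb, u, hu, h1, h2⟩ := h
  exact ⟨hne.symm, hb, ha, u, hu, h2, h1⟩

lemma rtg_symm {S : Finset ν} {a b : ν}
    (h : Relation.ReflTransGen (G.biEdge S) a b) :
    Relation.ReflTransGen (G.biEdge S) b a := by
  induction h with
  | refl => exact Relation.ReflTransGen.refl
  | tail _ e ih => exact Relation.ReflTransGen.head (biEdge_symm e) ih

noncomputable def cls (G : CausalGraph ν) (S : Finset ν) (a : ν) : Finset ν :=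
  S.filter (fun b => Relation.ReflTransGen (G.biEdge S) a b)

lemma comps_eq_image (S : Finset ν) : G.cComponents S = S.image (cls G S) := rfl

lemma mem_cls {S : Finset ν} {a b : ν} :
    b ∈ cls G S a ↔ b ∈ S ∧ Relation.ReflTransGen (G.biEdge S) a b := Finset.mem_filter

lemma cls_subset {S : Finset ν} {a : ν} : cls G S a ⊆ S := Finset.filter_subset _ _

lemma mem_cls_self {S : Finset ν} {a : ν} (ha : a ∈ S) : a ∈ cls G S a :=
  mem_cls.mpr ⟨ha, Relation.ReflTransGen.refl⟩

lemma cls_eq_of_rtg {S : Finset ν} {a b : ν}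
    (h : Relation.ReflTransGen (G.biEdge S) a b) : cls G S a = cls G S b := by
  ext c
  rw [mem_cls, mem_cls]
  exact ⟨fun ⟨hc, h1⟩ => ⟨hc, (rtg_symm h).trans h1⟩, fun ⟨hc, h1⟩ => ⟨hc, h.trans h1⟩⟩

lemma biEdge_of_subset {X S : Finset ν} (hXS : X ⊆ S) {a b : ν}
    (h : G.biEdge X a b) : G.biEdge S a b := by
  obtain ⟨hne, ha, hb, u, hu, h1, h2⟩ := h
  exact ⟨hne, hXS ha, hXS hb, u, hu, h1, h2⟩

lemma rtg_avoid {S X : Finset ν} {b : ν}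
    (hb : ∀ c, Relation.ReflTransGen (G.biEdge S) b c → c ∉ X) :
    ∀ c, Relation.ReflTransGen (G.biEdge S) b c →
      Relation.ReflTransGen (G.biEdge (S \ X)) b c := by
  intro c h
  induction h with
  | refl => exact Relation.ReflTransGen.refl
  | @tail c' c h1 e ih =>
    refine ih.tail ?_
    have hcX : c ∉ X := hb c (h1.tail e)
    have hc'X : c' ∉ X := hb c' h1
    obtain ⟨hne, hc', hc, u, hu, e1, e2⟩ := e
    exact ⟨hne, Finset.mem_sdiff.mpr ⟨hc', hc'X⟩,
      Finset.mem_sdiff.mpr ⟨hc, hcX⟩, u, hu, e1, e2⟩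

lemma cls_sdiff {S X : Finset ν} {b : ν} (hbS : b ∈ S)
    (hbX : ∀ c, Relation.ReflTransGen (G.biEdge S) b c → c ∉ X) :
    cls G (S \ X) b = cls G S b := by
  ext c
  rw [mem_cls, mem_cls]
  constructor
  · rintro ⟨hc, h1⟩
    exact ⟨(Finset.mem_sdiff.mp hc).1,
      Relation.ReflTransGen.mono (show G.biEdge (S \ X) ≤ G.biEdge S from
        fun x y hxy => biEdge_of_subset Finset.sdiff_subset hxy) _ _ h1⟩
  · rintro ⟨hc, h1⟩
    exact ⟨Finset.mem_sdiff.mpr ⟨hc, hbX c h1⟩, rtg_avoid hbX c h1⟩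

lemma cls_mem_comps {S : Finset ν} {a : ν} (ha : a ∈ S) : cls G S a ∈ G.cComponents S := by
  rw [comps_eq_image]
  exact Finset.mem_image_of_mem _ ha

lemma comps_subset_obs {S : Finset ν} (hS : S ⊆ G.obs) {T : Finset ν}
    (hT : T ∈ G.cComponents S) : T ⊆ S := by
  rw [comps_eq_image] at hT
  obtain ⟨a, _, rfl⟩ := Finset.mem_image.mp hT
  exact cls_subset

lemma cls_notmem_sdiff {S : Finset ν} {a : ν} :
    cls G S a ∉ G.cComponents (S \ cls G S a) := by
  intro h
  rw [comps_eq_image] at h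
  obtain ⟨b, hb, heq⟩ := Finset.mem_image.mp h
  have hbm : b ∈ cls G (S \ cls G S a) b :=
    mem_cls_self hb
  rw [heq] at hbm
  exact (Finset.mem_sdiff.mp hb).2 hbm

lemma comps_sdiff_cls {S : Finset ν} {a : ν} (ha : a ∈ S) :
    G.cComponents S = insert (cls G S a) (G.cComponents (S \ cls G S a)) := by
  apply Finset.Subset.antisymm
  · intro T hT
    rw [comps_eq_image] at hT
    obtain ⟨b, hbS, rfl⟩ := Finset.mem_image.mp hT
    by_cases hr : Relation.ReflTransGen (G.biEdge S) a b
    · rw [← cls_eq_of_rtg hr]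
      exact Finset.mem_insert_self _ _
    · have hbX : ∀ c, Relation.ReflTransGen (G.biEdge S) b c → c ∉ cls G S a := by
        intro c hc hcT
        exact hr ((mem_cls.mp hcT).2.trans (rtg_symm hc))
      have hb' : b ∈ S \ cls G S a := Finset.mem_sdiff.mpr ⟨hbS, fun hc =>
        hr (mem_cls.mp hc).2⟩
      refine Finset.mem_insert_of_mem ?_
      rw [comps_eq_image, ← cls_sdiff hbS hbX]
      exact Finset.mem_image_of_mem _ hb'
  · rw [Finset.insert_subset_iff]
    refine ⟨cls_mem_comps ha, ?_⟩
    intro T hT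
    rw [comps_eq_image] at hT
    obtain ⟨b, hb, rfl⟩ := Finset.mem_image.mp hT
    obtain ⟨hbS, hbT⟩ := Finset.mem_sdiff.mp hb
    have hbX : ∀ c, Relation.ReflTransGen (G.biEdge S) b c → c ∉ cls G S a := by
      intro c hc hcT
      exact hbT (mem_cls.mpr ⟨hbS, (mem_cls.mp hcT).2.trans (rtg_symm hc)⟩)
    rw [cls_sdiff hbS hbX]
    exact cls_mem_comps hbS

lemma comps_erase {S : Finset ν} {m : ν} (hm : m ∈ S) {T : Finset ν}
    (hT : T ∈ G.cComponents S) (hne : T ≠ cls G S m) :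
    T ∈ G.cComponents (S.erase m) := by
  rw [comps_eq_image] at hT
  obtain ⟨b, hbS, rfl⟩ := Finset.mem_image.mp hT
  have hr : ¬ Relation.ReflTransGen (G.biEdge S) b m := by
    intro h
    exact hne (cls_eq_of_rtg (rtg_symm h)).symm
  have hbX : ∀ c, Relation.ReflTransGen (G.biEdge S) b c → c ∉ ({m} : Finset ν) := by
    intro c hc hcm
    rw [Finset.mem_singleton] at hcm
    subst hcm
    exact hr hc
  have hbm : b ≠ m := fun h => hr (h ▸ Relation.ReflTransGen.refl)
  rw [Finset.erase_eq, comps_eq_image, ← cls_sdiff hbS hbX]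
  exact Finset.mem_image_of_mem _ (Finset.mem_sdiff.mpr ⟨hbS, by simp [hbm]⟩)

end TP
namespace TP
open Finset CausalGraph

variable {ν : Type} [Fintype ν] [DecidableEq ν] {G : CausalGraph ν}

lemma obsAssign_dom {M : SEM G} {v : ν → ℕ} (hv : v ∈ M.obsAssign) :
    ∀ i ∈ G.obs, v i ∈ M.dom i := by
  intro i hi
  have := Fintype.mem_piFinset.mp hv i
  simpa [hi] using this

lemma obsAssign_zero {M : SEM G} {v : ν → ℕ} (hv : v ∈ M.obsAssign) :
    ∀ i ∉ G.obs, v i = 0 := by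
  intro i hi
  have := Fintype.mem_piFinset.mp hv i
  simpa [hi] using this

lemma mem_obsAssign {M : SEM G} {v : ν → ℕ}
    (h1 : ∀ i ∈ G.obs, v i ∈ M.dom i) (h2 : ∀ i ∉ G.obs, v i = 0) :
    v ∈ M.obsAssign := by
  rw [SEM.obsAssign, Fintype.mem_piFinset]
  intro i
  by_cases hi : i ∈ G.obs
  · simpa [hi] using h1 i hi
  · simpa [hi] using h2 i hi

lemma update_mem_obsAssign {M : SEM G} {v : ν → ℕ} (hv : v ∈ M.obsAssign)
    {m : ν} (hm : m ∈ G.obs) {n : ℕ} (hn : n ∈ M.dom m) :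
    Function.update v m n ∈ M.obsAssign := by
  refine mem_obsAssign ?_ ?_
  · intro i hi
    by_cases him : i = m
    · subst him; simpa using hn
    · rw [Function.update_of_ne him]; exact obsAssign_dom hv i hi
  · intro i hi
    have him : i ≠ m := fun h => hi (h ▸ hm)
    rw [Function.update_of_ne him]
    exact obsAssign_zero hv i hi

lemma Q_empty (M : SEM G) (v : ν → ℕ) (hv : ∀ i ∈ G.obs, v i ∈ M.dom i) :
    M.Q ∅ v = 1 := by
  rw [Q_eq_pin M ∅ v hv]
  have : ∀ w : ν → ℕ, blk M ∅ G.unobs (pin G v w) = ∏ u ∈ G.unobs, M.pU u (w u) := by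
    intro w
    unfold blk
    rw [Finset.prod_empty, one_mul]
    exact Finset.prod_congr rfl fun u hu => by rw [pin_unobs hu]
  rw [Finset.sum_congr rfl fun w _ => this w]
  refine TP.sum_pi_prod_one G.unobs _ _ ?_ ?_
  · intro u hu
    simp only [DU, if_pos hu]
    exact M.pU_sum u hu
  · intro i hi
    exact ⟨0, by simp [DU, hi]⟩

lemma Q_factor (M : SEM G) : ∀ S : Finset ν, S ⊆ G.obs →
    ∀ v : ν → ℕ, (∀ i ∈ G.obs, v i ∈ M.dom i) →
    M.Q S v = ∏ T ∈ G.cComponents S, M.Q T v := by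
  intro S
  induction S using Finset.strongInduction with
  | _ S ih =>
    intro hS v hv
    rcases S.eq_empty_or_nonempty with rfl | ⟨a, ha⟩
    · rw [Q_empty M v hv]
      simp [CausalGraph.cComponents]
    · have hTaS : cls G S a ⊆ S := cls_subset
      have hsep : ∀ u ∈ G.unobs, ∀ p ∈ cls G S a, ∀ q ∈ S \ cls G S a,
          G.E u p → G.E u q → False := by
        intro u hu p hp q hq hEp hEq
        obtain ⟨hqS, hqT⟩ := Finset.mem_sdiff.mp hq
        have hpq : p ≠ q := fun h => hqT (h ▸ hp)
        have hbe : G.biEdge S p q := ⟨hpq, hTaS hp, hqS, u, hu, hEp, hEq⟩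
        exact hqT (mem_cls.mpr ⟨hqS, (mem_cls.mp hp).2.tail hbe⟩)
      have hsplit := Q_split M (hTaS.trans hS) ((Finset.sdiff_subset).trans hS)
        Finset.disjoint_sdiff hsep v hv
      rw [Finset.union_sdiff_of_subset hTaS] at hsplit
      have hss : S \ cls G S a ⊂ S :=
        Finset.sdiff_ssubset hTaS ⟨a, mem_cls_self ha⟩
      rw [comps_sdiff_cls ha, Finset.prod_insert cls_notmem_sdiff,
        ← ih _ hss ((Finset.sdiff_subset).trans hS) v hv]
      exact hsplit

lemma P_le_Q (M : SEM G) {S : Finset ν} (hS : S ⊆ G.obs) (v : ν → ℕ)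
    (hv : ∀ i ∈ G.obs, v i ∈ M.dom i) :
    M.P v ≤ M.Q S v := by
  rw [SEM.P, Q_eq_pin M G.obs v hv, Q_eq_pin M S v hv]
  refine Finset.sum_le_sum fun w _ => ?_
  set z := pin G v w with hz
  have hsplit : blk M G.obs G.unobs z =
      (∏ x ∈ G.obs \ S, M.pO x (z x) z) * blk M S G.unobs z := by
    unfold blk
    rw [← Finset.prod_sdiff hS, mul_assoc]
  rw [hsplit]
  have h1 : (∏ x ∈ G.obs \ S, M.pO x (z x) z) ≤ 1 := by
    refine Finset.prod_le_one (fun x _ => M.pO_nonneg _ _ _) ?_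
    intro x hx
    have hxo : x ∈ G.obs := (Finset.mem_sdiff.mp hx).1
    have hzx : z x = v x := pin_obs hxo
    have hmem : z x ∈ M.dom x := by rw [hzx]; exact hv x hxo
    calc M.pO x (z x) z ≤ ∑ n ∈ M.dom x, M.pO x n z :=
          Finset.single_le_sum (f := fun n => M.pO x n z)
            (fun n _ => M.pO_nonneg _ _ _) hmem
      _ = 1 := M.pO_sum x hxo z
  have h2 : 0 ≤ blk M S G.unobs z :=
    mul_nonneg (Finset.prod_nonneg fun x _ => M.pO_nonneg _ _ _)
      (Finset.prod_nonneg fun u _ => M.pU_nonneg _ _)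
  exact mul_le_of_le_one_left h2 h1

lemma Q_pos {M : SEM G} (hpos : M.positive) {S : Finset ν} (hS : S ⊆ G.obs)
    {v : ν → ℕ} (hv : v ∈ M.obsAssign) : 0 < M.Q S v :=
  lt_of_lt_of_le (hpos v hv) (P_le_Q M hS v (obsAssign_dom hv))

lemma Q_marg (M : SEM G) {S : Finset ν} (hS : S ⊆ G.obs) {m : ν} (hm : m ∈ S)
    (hmax : ∀ y ∈ S, ¬ G.E m y) (v : ν → ℕ) (hv : ∀ i ∈ G.obs, v i ∈ M.dom i) :
    ∑ n ∈ M.dom m, M.Q S (Function.update v m n) = M.Q (S.erase m) v := by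
  have hmo : m ∈ G.obs := hS hm
  have key : ∀ n ∈ M.dom m,
      M.Q S (Function.update v m n) =
        ∑ w ∈ Fintype.piFinset (DU M),
          M.pO m n (pin G v w) * blk M (S.erase m) G.unobs (pin G v w) := by
    intro n hn
    have hv' : ∀ i ∈ G.obs, Function.update v m n i ∈ M.dom i := by
      intro i hi
      by_cases him : i = m
      · subst him; simpa using hn
      · rw [Function.update_of_ne him]; exact hv i hi
    rw [Q_eq_pin M S _ hv']
    refine Finset.sum_congr rfl fun w _ => ?_
    have hpin : pin G (Function.update v m n) w = Function.update (pin G v w) m n := by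
      funext i
      by_cases him : i = m
      · subst him
        rw [Function.update_self, pin_obs hmo, Function.update_self]
      · rw [Function.update_of_ne him]
        by_cases hi : i ∈ G.unobs
        · rw [pin_unobs hi, pin_unobs hi]
        · by_cases hio : i ∈ G.obs
          · rw [pin_obs hio, pin_obs hio, Function.update_of_ne him]
          · simp [pin, hi, hio]
      -- done
    rw [hpin]
    set z := pin G v w with hzdef
    have hnm : ∀ p, G.E p m → Function.update z m n p = z p := by
      intro p hp
      have hpm : p ≠ m := by
        intro h
        rw [h] at hp
        exact hmax m hm hp
      rw [Function.update_of_ne hpm]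
    unfold blk
    rw [← Finset.mul_prod_erase S _ hm]
    have e1 : M.pO m (Function.update z m n m) (Function.update z m n) = M.pO m n z := by
      rw [Function.update_self]
      exact M.pO_par m n _ z hnm
    have e2 : ∀ x ∈ S.erase m,
        M.pO x (Function.update z m n x) (Function.update z m n) = M.pO x (z x) z := by
      intro x hx
      obtain ⟨hxm, hxS⟩ := Finset.mem_erase.mp hx
      rw [Function.update_of_ne hxm]
      exact M.pO_par x (z x) _ z (by
        intro p hp
        have hpm : p ≠ m := by
          intro h
          rw [h] at hp
          exact hmax x hxS hp
        rw [Function.update_of_ne hpm])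
    have e3 : ∀ u ∈ G.unobs, M.pU u (Function.update z m n u) = M.pU u (z u) := by
      intro u hu
      rw [Function.update_of_ne (fun h => notin_unobs G hmo (by rw [← h]; exact hu))]
    rw [e1, Finset.prod_congr rfl e2, Finset.prod_congr rfl e3, mul_assoc]
  rw [Finset.sum_congr rfl key, Finset.sum_comm]
  rw [Q_eq_pin M _ v hv]
  refine Finset.sum_congr rfl fun w _ => ?_
  rw [← Finset.sum_mul, M.pO_sum m hmo, one_mul]
end TP
namespace TP
open Finset CausalGraph

variable {ν : Type} [Fintype ν] [DecidableEq ν] {G : CausalGraph ν}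

lemma Px_eq_Q (M : SEM G) {T : Finset ν} (hT : T ⊆ G.obs) (x y : ν → ℕ)
    (hx : ∀ i ∈ G.obs \ T, x i ∈ M.dom i) (hy : ∀ i ∈ T, y i ∈ M.dom i) :
    M.Px (G.obs \ T) x T y =
      M.Q T (fun i => if i ∈ G.obs then (if i ∈ T then y i else x i) else 0) := by
  set v0 : ν → ℕ := fun i => if i ∈ G.obs then (if i ∈ T then y i else x i) else 0 with hv0
  have hv0mem : v0 ∈ M.obsAssign := by
    refine mem_obsAssign ?_ ?_
    · intro i hi
      by_cases hiT : i ∈ T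
      · simp only [hv0, if_pos hi, if_pos hiT]
        exact hy i hiT
      · simp only [hv0, if_pos hi, if_neg hiT]
        exact hx i (Finset.mem_sdiff.mpr ⟨hi, hiT⟩)
    · intro i hi
      simp only [hv0, if_neg hi]
  have hfilter : M.obsAssign.filter
      (fun v => (∀ i ∈ G.obs \ T, v i = x i) ∧ (∀ i ∈ T, v i = y i)) = {v0} := by
    ext v
    rw [Finset.mem_filter, Finset.mem_singleton]
    constructor
    · rintro ⟨hv, hvx, hvy⟩
      funext i
      by_cases hi : i ∈ G.obs
      · by_cases hiT : i ∈ T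
        · simp only [hv0, if_pos hi, if_pos hiT]
          exact hvy i hiT
        · simp only [hv0, if_pos hi, if_neg hiT]
          exact hvx i (Finset.mem_sdiff.mpr ⟨hi, hiT⟩)
      · simp only [hv0, if_neg hi]
        exact obsAssign_zero hv i hi
    · rintro rfl
      refine ⟨hv0mem, ?_, ?_⟩
      · intro i hi
        obtain ⟨hio, hiT⟩ := Finset.mem_sdiff.mp hi
        simp only [hv0, if_pos hio, if_neg hiT]
      · intro i hi
        simp only [hv0, if_pos (hT hi), if_pos hi]
  rw [SEM.Px, hfilter, Finset.sum_singleton, Finset.sdiff_sdiff_self_left,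
    Finset.inter_eq_right.mpr hT]

lemma v0_mem_obsAssign (M : SEM G) {T : Finset ν} (hT : T ⊆ G.obs) (x y : ν → ℕ)
    (hx : ∀ i ∈ G.obs \ T, x i ∈ M.dom i) (hy : ∀ i ∈ T, y i ∈ M.dom i) :
    (fun i => if i ∈ G.obs then (if i ∈ T then y i else x i) else 0) ∈ M.obsAssign := by
  refine mem_obsAssign ?_ ?_
  · intro i hi
    by_cases hiT : i ∈ T
    · simp only [if_pos hi, if_pos hiT]
      exact hy i hiT
    · simp only [if_pos hi, if_neg hiT]
      exact hx i (Finset.mem_sdiff.mpr ⟨hi, hiT⟩)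
  · intro i hi
    simp only [if_neg hi]

lemma if_collapse {T : Finset ν} (v : ν → ℕ) (hv : ∀ i ∉ G.obs, v i = 0) :
    (fun i => if i ∈ G.obs then (if i ∈ T then v i else v i) else 0) = v := by
  funext i
  by_cases hi : i ∈ G.obs
  · simp [hi]
  · simp [hi, hv i hi]

lemma core (M₁ M₂ : SEM G) (h₁ : M₁.positive)
    (hdom : ∀ i ∈ G.obs, M₁.dom i = M₂.dom i) :
    ∀ S : Finset ν, S ⊆ G.obs →
      (∀ v ∈ M₁.obsAssign, M₁.Q S v = M₂.Q S v) →
      ∀ T ∈ G.cComponents S, ∀ v ∈ M₁.obsAssign, M₁.Q T v = M₂.Q T v := by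
  intro S
  induction S using Finset.strongInduction with
  | _ S ih =>
    intro hS hQ T hT v hv
    have hSne : S.Nonempty := by
      rcases S.eq_empty_or_nonempty with rfl | h
      · exfalso
        rw [comps_eq_image] at hT
        simp at hT
      · exact h
    obtain ⟨m, hmS, hmax⟩ : ∃ m ∈ S, ∀ y ∈ S, ¬ G.E m y := by
      haveI : IsIrrefl ν (fun a b => Relation.TransGen G.E b a) :=
        ⟨fun a h => G.acyclic a h⟩
      haveI : IsTrans ν (fun a b => Relation.TransGen G.E b a) :=
        ⟨fun a b c h1 h2 => Relation.TransGen.trans h2 h1⟩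
      have wf := Finite.wellFounded_of_trans_of_irrefl
        (fun a b : ν => Relation.TransGen G.E b a)
      obtain ⟨m, hm, hmin⟩ := wf.has_min (↑S : Set ν) (by
        exact_mod_cast hSne)
      refine ⟨m, by exact_mod_cast hm, fun y hy hE => ?_⟩
      exact hmin y (by exact_mod_cast hy) (Relation.TransGen.single hE)
    have hmo : m ∈ G.obs := hS hmS
    have hQ' : ∀ v ∈ M₁.obsAssign, M₁.Q (S.erase m) v = M₂.Q (S.erase m) v := by
      intro u hu
      have hu1 := obsAssign_dom hu
      have hu2 : ∀ i ∈ G.obs, u i ∈ M₂.dom i := fun i hi => (hdom i hi) ▸ hu1 i hi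
      rw [← Q_marg M₁ hS hmS hmax u hu1, ← Q_marg M₂ hS hmS hmax u hu2]
      refine Finset.sum_congr (hdom m hmo) fun n hn => ?_
      have hn1 : n ∈ M₁.dom m := by rw [hdom m hmo]; exact hn
      exact hQ _ (update_mem_obsAssign hu hmo hn1)
    have herase : S.erase m ⊂ S := Finset.erase_ssubset hmS
    have heraseS : S.erase m ⊆ G.obs := (Finset.erase_subset m S).trans hS
    have hother : ∀ T' ∈ G.cComponents S, T' ≠ cls G S m →
        M₁.Q T' v = M₂.Q T' v := by
      intro T' hT' hne
      exact ih (S.erase m) herase heraseS hQ' T' (comps_erase hmS hT' hne) v hv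
    by_cases hTm : T = cls G S m
    · subst hTm
      have hv1 := obsAssign_dom hv
      have hv2 : ∀ i ∈ G.obs, v i ∈ M₂.dom i := fun i hi => (hdom i hi) ▸ hv1 i hi
      have hfac1 := Q_factor M₁ S hS v hv1
      have hfac2 := Q_factor M₂ S hS v hv2
      have heq : M₁.Q (cls G S m) v * ∏ T' ∈ (G.cComponents S).erase (cls G S m), M₁.Q T' v
          = M₂.Q (cls G S m) v * ∏ T' ∈ (G.cComponents S).erase (cls G S m), M₂.Q T' v := by
        rw [Finset.mul_prod_erase (G.cComponents S) (fun T' => M₁.Q T' v) hT,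
          Finset.mul_prod_erase (G.cComponents S) (fun T' => M₂.Q T' v) hT,
          ← hfac1, ← hfac2]
        exact hQ v hv
      have hprod_eq : ∏ T' ∈ (G.cComponents S).erase (cls G S m), M₁.Q T' v
          = ∏ T' ∈ (G.cComponents S).erase (cls G S m), M₂.Q T' v := by
        refine Finset.prod_congr rfl fun T' hT' => ?_
        exact hother T' (Finset.mem_of_mem_erase hT') (Finset.ne_of_mem_erase hT')
      rw [← hprod_eq] at heq
      have hpos : 0 < ∏ T' ∈ (G.cComponents S).erase (cls G S m), M₁.Q T' v := by
        refine Finset.prod_pos fun T' hT' => ?_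
        have hT'S := comps_subset_obs hS (Finset.mem_of_mem_erase hT')
        exact Q_pos h₁ (hT'S.trans hS) hv
      exact mul_right_cancel₀ (ne_of_gt hpos) heq
    · exact hother T hT hTm

end TP
/-- Proposition 2, Tian–Pearl. `Q[S]` is identifiable from `G` iff
`Q[Sᵢ]` is identifiable from `G` for every c-component `Sᵢ` of `S`. -/
theorem id_iff_id_all_ccomponents
    {ν : Type} [Fintype ν] [DecidableEq ν] (G : CausalGraph ν)
    (S : Finset ν) (hS : S ⊆ G.obs) :
    G.QIdentifiable S ↔ ∀ T ∈ G.cComponents S, G.QIdentifiable T := by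
  constructor
  · intro hid T hT
    have hTS : T ⊆ S := TP.comps_subset_obs hS hT
    have hTobs : T ⊆ G.obs := hTS.trans hS
    intro M₁ M₂ h₁ h₂ hdom hP x y hx hy
    have hx₂ : ∀ i ∈ G.obs \ T, x i ∈ M₂.dom i := fun i hi =>
      (hdom i (Finset.mem_sdiff.mp hi).1) ▸ hx i hi
    have hy₂ : ∀ i ∈ T, y i ∈ M₂.dom i := fun i hi =>
      (hdom i (hTobs hi)) ▸ hy i hi
    rw [TP.Px_eq_Q M₁ hTobs x y hx hy, TP.Px_eq_Q M₂ hTobs x y hx₂ hy₂]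
    have hQS : ∀ v ∈ M₁.obsAssign, M₁.Q S v = M₂.Q S v := by
      intro v hv
      have hx' : ∀ i ∈ G.obs \ S, v i ∈ M₁.dom i := fun i hi =>
        TP.obsAssign_dom hv i (Finset.mem_sdiff.mp hi).1
      have hy' : ∀ i ∈ S, v i ∈ M₁.dom i := fun i hi => TP.obsAssign_dom hv i (hS hi)
      have hx'' : ∀ i ∈ G.obs \ S, v i ∈ M₂.dom i := fun i hi =>
        (hdom i (Finset.mem_sdiff.mp hi).1) ▸ hx' i hi
      have hy'' : ∀ i ∈ S, v i ∈ M₂.dom i := fun i hi => (hdom i (hS hi)) ▸ hy' i hi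
      have := hid M₁ M₂ h₁ h₂ hdom hP v v hx' hy'
      rw [TP.Px_eq_Q M₁ hS v v hx' hy', TP.Px_eq_Q M₂ hS v v hx'' hy'',
        TP.if_collapse v (TP.obsAssign_zero hv)] at this
      exact this
    exact TP.core M₁ M₂ h₁ hdom S hS hQS T hT _
      (TP.v0_mem_obsAssign M₁ hTobs x y hx hy)
  · intro hall M₁ M₂ h₁ h₂ hdom hP x y hx hy
    have hx₂ : ∀ i ∈ G.obs \ S, x i ∈ M₂.dom i := fun i hi =>
      (hdom i (Finset.mem_sdiff.mp hi).1) ▸ hx i hi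
    have hy₂ : ∀ i ∈ S, y i ∈ M₂.dom i := fun i hi => (hdom i (hS hi)) ▸ hy i hi
    rw [TP.Px_eq_Q M₁ hS x y hx hy, TP.Px_eq_Q M₂ hS x y hx₂ hy₂]
    set v0 : ν → ℕ := fun i => if i ∈ G.obs then (if i ∈ S then y i else x i) else 0
      with hv0def
    have hv0mem : v0 ∈ M₁.obsAssign := TP.v0_mem_obsAssign M₁ hS x y hx hy
    have hv0dom1 : ∀ i ∈ G.obs, v0 i ∈ M₁.dom i := TP.obsAssign_dom hv0mem
    have hv0dom2 : ∀ i ∈ G.obs, v0 i ∈ M₂.dom i := fun i hi => (hdom i hi) ▸ hv0dom1 i hi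
    have hv0zero : ∀ i ∉ G.obs, v0 i = 0 := TP.obsAssign_zero hv0mem
    rw [TP.Q_factor M₁ S hS v0 hv0dom1, TP.Q_factor M₂ S hS v0 hv0dom2]
    refine Finset.prod_congr rfl fun T hT => ?_
    have hTobs : T ⊆ G.obs := (TP.comps_subset_obs hS hT).trans hS
    have hx' : ∀ i ∈ G.obs \ T, v0 i ∈ M₁.dom i := fun i hi =>
      hv0dom1 i (Finset.mem_sdiff.mp hi).1
    have hy' : ∀ i ∈ T, v0 i ∈ M₁.dom i := fun i hi => hv0dom1 i (hTobs hi)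
    have hx'' : ∀ i ∈ G.obs \ T, v0 i ∈ M₂.dom i := fun i hi =>
      hv0dom2 i (Finset.mem_sdiff.mp hi).1
    have hy'' : ∀ i ∈ T, v0 i ∈ M₂.dom i := fun i hi => hv0dom2 i (hTobs hi)
    have := hall T hT M₁ M₂ h₁ h₂ hdom hP v0 v0 hx' hy'
    rw [TP.Px_eq_Q M₁ hTobs v0 v0 hx' hy', TP.Px_eq_Q M₂ hTobs v0 v0 hx'' hy'',
      TP.if_collapse v0 hv0zero] at this
    exact this
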